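/- Let M be a matroid on a finite ground set and let A and B be two bases of M. Then there exists a bijection π : A → B such that (A ∖ {x}) ∪ {π(x)} is a base of M for every x ∈ A. -/

import Mathlib

open Set

/-- Exchange lemma: if `y ∈ B` is not in the closure of `A \ S`, then some `x ∈ S` can be
exchanged for `y` in the base `A`. -/
private lemma brualdi_exchange {α : Type*} {M : Matroid α} {A B S : Set α}
    (hE : M.E.Finite) (hA : M.IsBase A) (hB : M.IsBase B) (hS : S ⊆ A) {y : α} (hyB : y ∈ B)
    (hy : y ∉ M.closure (A \ S)) :
    ∃ x ∈ S, M.IsBase ((A \ {x}) ∪ {y}) := by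
  by_cases hyA : y ∈ A
  · have hyS : y ∈ S := by
      by_contra h
      exact hy (M.subset_closure (A \ S) (fun a ha => hA.subset_ground ha.1) ⟨hyA, h⟩)
    refine ⟨y, hyS, ?_⟩
    have hAy : (A \ {y}) ∪ {y} = A := by
      ext a; by_cases h : a = y <;> simp [h, hyA]
    rwa [hAy]
  · have hAfin : A.Finite := hE.subset hA.subset_ground
    have hyE : y ∈ M.E := hB.subset_ground hyB
    have hAS : M.Indep (A \ S) := hA.indep.subset diff_subset
    have hI0 : M.Indep (insert y (A \ S)) := by
      rw [hAS.insert_indep_iff_of_notMem (fun h => hyA h.1)]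
      exact ⟨hyE, hy⟩
    have hsub : insert y (A \ S) ⊆ insert y A := insert_subset_insert diff_subset
    have hyAE : insert y A ⊆ M.E := insert_subset hyE hA.subset_ground
    obtain ⟨I, hI, hI0I⟩ := hI0.subset_isBasis_of_subset hsub hyAE
    have hAbasis : M.IsBasis A (insert y A) := by
      refine hA.indep.isBasis_of_subset_of_subset_closure (subset_insert _ _) ?_
      rw [hA.closure_eq]; exact hyAE
    have hcard : I.encard = A.encard := hI.encard_eq_encard hAbasis
    have hyI : y ∈ I := hI0I (mem_insert _ _)
    have hInA : I \ {y} ⊆ A := by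
      intro a ha
      rcases mem_insert_iff.mp (hI.subset ha.1) with h | h
      · exact absurd h ha.2
      · exact h
    have hx : (A \ (I \ {y})).Nonempty := by
      rw [nonempty_iff_ne_empty, Ne, diff_eq_empty]
      intro hAI
      have heq : A = I \ {y} := subset_antisymm hAI hInA
      have hIeq : I = insert y A := by
        rw [heq]; ext a; by_cases h : a = y <;> simp [h, hyI]
      rw [hIeq, encard_insert_of_notMem hyA] at hcard
      have h1 : A.encard ≠ ⊤ := hAfin.encard_lt_top.ne
      have h2 : A.encard + 1 ≤ A.encard := le_of_eq hcard
      rw [ENat.add_one_le_iff h1] at h2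
      exact lt_irrefl _ h2
    obtain ⟨x, hxA, hxnI⟩ := hx
    have hxy : x ≠ y := fun h => hyA (h ▸ hxA)
    have hxI : x ∉ I := fun h => hxnI ⟨h, hxy⟩
    have hxS : x ∈ S := by
      by_contra h
      exact hxI (hI0I (mem_insert_of_mem _ ⟨hxA, h⟩))
    have hsub2 : I ⊆ (A \ {x}) ∪ {y} := by
      intro a ha
      rcases mem_insert_iff.mp (hI.subset ha) with h | h
      · exact Or.inr (by simp [h])
      · exact Or.inl ⟨h, fun h' => hxI (by rwa [mem_singleton_iff.mp h'] at ha)⟩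
    have htenc : ((A \ {x}) ∪ {y}).encard = A.encard := by
      rw [union_singleton, encard_insert_of_notMem (fun h => hyA h.1),
        encard_diff_singleton_add_one hxA]
    have hIeq : I = (A \ {x}) ∪ {y} :=
      (hAfin.diff.union (finite_singleton y)).eq_of_subset_of_encard_le' hsub2
        (by rw [htenc, hcard])
    refine ⟨x, hxS, ?_⟩
    rw [← hIeq]
    have hclE : M.closure (insert y A) = M.E := hA.closure_of_superset (subset_insert _ _)
    have hbasisE := hI.isBasis_closure_right
    rw [hclE, Matroid.isBasis_ground_iff] at hbasisE
    exact hbasisE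

/-- Counting lemma: the part of `B` in the closure of `A \ S` has size at most `|A \ S|`. -/
private lemma brualdi_count {α : Type*} {M : Matroid α} {A B : Set α} (hA : M.IsBase A)
    (hB : M.IsBase B) (S : Set α) :
    (B ∩ M.closure (A \ S)).encard ≤ (A \ S).encard := by
  have hAS : M.Indep (A \ S) := hA.indep.subset diff_subset
  have h1 : M.IsBasis (A \ S) (M.closure (A \ S)) := hAS.isBasis_closure
  have h2 : M.Indep (B ∩ M.closure (A \ S)) := hB.indep.subset inter_subset_left
  obtain ⟨J, hJ, hsub⟩ := h2.subset_isBasis_of_subset inter_subset_right (M.closure_subset_ground _)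
  calc (B ∩ M.closure (A \ S)).encard ≤ J.encard := encard_mono hsub
    _ = (A \ S).encard := hJ.encard_eq_encard h1

/-- Brualdi's lemma: for two bases `A`, `B` of a matroid on a finite ground set, there is a
bijection `π : A → B` with `(A ∖ {x}) ∪ {π x}` a base for every `x ∈ A`. -/
theorem stmt_2 {α : Type*} (M : Matroid α) (hE : M.E.Finite)
    {A B : Set α} (hA : M.IsBase A) (hB : M.IsBase B) :
    ∃ π : α → α, Set.BijOn π A B ∧ ∀ x ∈ A, M.IsBase ((A \ {x}) ∪ {π x}) := by
  classical
  have hAfin : A.Finite := hE.subset hA.subset_ground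
  have hBfin : B.Finite := hE.subset hB.subset_ground
  have hcard : A.ncard = B.ncard := hA.ncard_eq_ncard_of_isBase hB
  set N : α → Set α := fun x => {y ∈ B | M.IsBase ((A \ {x}) ∪ {y})} with hN
  have hNfin : ∀ x : α, (N x).Finite := fun x => hBfin.subset (sep_subset _ _)
  have hall : ∀ s : Finset ↥A, s.card ≤ (s.biUnion (fun x => (hNfin ↑x).toFinset)).card := by
    intro s
    set S : Set α := Subtype.val '' (↑s : Set ↥A) with hSdef
    have hSA : S ⊆ A := by rintro _ ⟨⟨a, ha⟩, _, rfl⟩; exact ha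
    have hScard : S.ncard = s.card := by
      rw [hSdef, Set.ncard_image_of_injective _ Subtype.val_injective, ncard_coe_finset]
    have hkey : B \ M.closure (A \ S) ⊆ ↑(s.biUnion fun x => (hNfin ↑x).toFinset) := by
      intro y hy
      obtain ⟨x, hxS, hbase⟩ := brualdi_exchange hE hA hB hSA hy.1 hy.2
      obtain ⟨a, has, rfl⟩ := hxS
      simp only [Finset.coe_biUnion, mem_iUnion, Finset.mem_coe, Set.Finite.mem_toFinset]
      exact ⟨a, has, hy.1, hbase⟩
    have hBsplit : (B \ M.closure (A \ S)).ncard + (B ∩ M.closure (A \ S)).ncard = B.ncard := by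
      have hdiffeq : B \ M.closure (A \ S) = B \ (B ∩ M.closure (A \ S)) := by
        ext a; simp only [mem_diff, mem_inter_iff]; tauto
      rw [hdiffeq, Set.ncard_diff_add_ncard_of_subset inter_subset_left hBfin]
    have hAsplit : (A \ S).ncard + S.ncard = A.ncard :=
      Set.ncard_diff_add_ncard_of_subset hSA hAfin
    have hle : (B ∩ M.closure (A \ S)).ncard ≤ (A \ S).ncard := by
      have h2 := brualdi_count hA hB S
      have hne : (A \ S).encard ≠ ⊤ := hAfin.diff.encard_lt_top.ne
      rw [ncard_def, ncard_def]
      exact ENat.toNat_le_toNat h2 hne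
    have hfinal : s.card ≤ (B \ M.closure (A \ S)).ncard := by omega
    calc s.card ≤ (B \ M.closure (A \ S)).ncard := hfinal
      _ ≤ ((s.biUnion fun x => (hNfin ↑x).toFinset : Finset α) : Set α).ncard :=
          ncard_le_ncard hkey (s.biUnion _).finite_toSet
      _ = (s.biUnion fun x => (hNfin ↑x).toFinset).card := ncard_coe_finset _
  obtain ⟨f, hfinj, hf⟩ := (Finset.all_card_le_biUnion_card_iff_exists_injective _).mp hall
  have hmem : ∀ (a : α) (h : a ∈ A), f ⟨a, h⟩ ∈ N a := by
    intro a h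
    have := hf ⟨a, h⟩
    rwa [Set.Finite.mem_toFinset] at this
  set π : α → α := fun a => if h : a ∈ A then f ⟨a, h⟩ else a with hπ
  have hmaps : Set.MapsTo π A B := by
    intro a ha
    simp only [hπ, dif_pos ha]
    exact (hmem a ha).1
  have hinj : Set.InjOn π A := by
    intro a ha b hb h
    simp only [hπ, dif_pos ha, dif_pos hb] at h
    exact Subtype.mk_eq_mk.mp (hfinj h)
  have hsurj : Set.SurjOn π A B := by
    have himg : π '' A ⊆ B := Set.image_subset_iff.mpr hmaps
    have hicard : B.ncard ≤ (π '' A).ncard := by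
      rw [Set.ncard_image_of_injOn hinj, hcard]
    exact (Set.eq_of_subset_of_ncard_le himg hicard hBfin).ge
  refine ⟨π, ⟨hmaps, hinj, hsurj⟩, fun x hx => ?_⟩
  have := (hmem x hx).2
  simpa only [hπ, dif_pos hx] using this
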